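/- If f is holomorphic on the punctured unit disc with a pole of order at most n at 0 and continuous on the closed disc minus the origin (i.e., z^n f(z) extends holomorphically to the disc and continuously to the closed disc), then for 0 < |z| < 1, f(z) = ∫₀^{2π} f(e^{it})·conj(S⁽ⁿ⁾(e^{it},z)) dt, where S⁽ⁿ⁾(ζ,z) = (1/(2π))·1/((ζ·conj(z))^n(1 - ζ·conj(z))). -/

import Mathlib

open Complex Real MeasureTheory

theorem szego_formula_punctured_disc (n : ℕ) (g : ℂ → ℂ)
    (hgc : ContinuousOn g (Metric.closedBall 0 1))
    (hgd : DifferentiableOn ℂ g (Metric.ball 0 1))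
    (f : ℂ → ℂ) (hf : ∀ w : ℂ, w ≠ 0 → f w = g w / w ^ n)
    (z : ℂ) (hz0 : 0 < ‖z‖) (hz1 : ‖z‖ < 1) :
    f z = ∫ t in (0:ℝ)..(2 * π),
      f (Complex.exp (I * t)) *
        starRingEnd ℂ ((1 / (2 * π)) *
          (1 / ((Complex.exp (I * t) * starRingEnd ℂ z) ^ n *
            (1 - Complex.exp (I * t) * starRingEnd ℂ z)))) := by
  have hz : z ≠ 0 := by simpa [norm_pos_iff] using hz0
  have hmem : z ∈ Metric.ball (0:ℂ) 1 := by simpa using hz1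
  have hcif : (∮ ζ in C(0,1), (ζ - z)⁻¹ • g ζ) = (2 * ↑π * I) • g z := by
    refine DiffContOnCl.circleIntegral_sub_inv_smul ⟨hgd, ?_⟩ hmem
    simpa [closure_ball (0:ℂ) one_ne_zero] using hgc
  have hπ : (π:ℂ) ≠ 0 := by exact_mod_cast Real.pi_ne_zero
  have key : ∀ t : ℝ,
      f (Complex.exp (I * t)) *
        starRingEnd ℂ ((1 / (2 * ↑π)) *
          (1 / ((Complex.exp (I * t) * starRingEnd ℂ z) ^ n *
            (1 - Complex.exp (I * t) * starRingEnd ℂ z)))) =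
      (2 * ↑π * I * z ^ n)⁻¹ *
        (deriv (circleMap 0 1) t •
          ((circleMap 0 1 t - z)⁻¹ • g (circleMap 0 1 t))) := by
    intro t
    have hcm : circleMap 0 1 t = Complex.exp (I * t) := by
      simp [circleMap, mul_comm]
    set ζ := Complex.exp (I * t) with hζdef
    have hζ0 : ζ ≠ 0 := Complex.exp_ne_zero _
    have hζn : ‖ζ‖ = 1 := by
      simp [hζdef, Complex.norm_exp]
    have hconjζ : starRingEnd ℂ ζ = ζ⁻¹ := by
      rw [Complex.inv_def]
      simp [Complex.normSq_eq_norm_sq, hζn]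
    have hζz : ζ - z ≠ 0 := by
      intro h
      have heq : ζ = z := sub_eq_zero.mp h
      rw [← heq, hζn] at hz1
      exact lt_irrefl _ hz1
    rw [hf ζ hζ0, hcm, deriv_circleMap, hcm]
    simp only [map_mul, map_div₀, map_one, map_pow, map_sub, map_ofNat,
      Complex.conj_conj, hconjζ, Complex.conj_ofReal]
    field_simp
    have d1 : ζ ^ n * (2 * ↑π * (z ^ n * (ζ - z))) ≠ 0 :=
      mul_ne_zero (pow_ne_zero _ hζ0) (mul_ne_zero (mul_ne_zero two_ne_zero hπ)
        (mul_ne_zero (pow_ne_zero _ hz) hζz))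
    have d2 : 2 * ↑π * I * z ^ n * (ζ - z) ≠ 0 :=
      mul_ne_zero (mul_ne_zero (mul_ne_zero (mul_ne_zero two_ne_zero hπ) I_ne_zero)
        (pow_ne_zero _ hz)) hζz
    simp only [smul_eq_mul, div_pow]
    field_simp
  rw [intervalIntegral.integral_congr (fun t _ => key t),
    intervalIntegral.integral_const_mul]
  have : (∫ t in (0:ℝ)..(2*π),
      deriv (circleMap 0 1) t • ((circleMap 0 1 t - z)⁻¹ • g (circleMap 0 1 t)))
      = (2 * ↑π * I) • g z := hcif
  rw [this, hf z hz]
  field_simp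
  ring
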